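/- For any U ∈ ℋ (square-summable sequence on the half-space grid satisfying the extrapolation condition), there holds ⟨D₁,₀ U ; Δ₁ U⟩_{ℓ²(𝓘)} = 0. -/

import Mathlib

noncomputable section

/-- Forward difference in the first variable. -/
def D1p (u : ℤ → ℤ → ℝ) : ℤ → ℤ → ℝ := fun j k => u (j + 1) k - u j k
/-- Backward difference in the first variable. -/
def D1m (u : ℤ → ℤ → ℝ) : ℤ → ℤ → ℝ := fun j k => u j k - u (j - 1) k
/-- Forward difference in the second variable. -/
def D2p (u : ℤ → ℤ → ℝ) : ℤ → ℤ → ℝ := fun j k => u j (k + 1) - u j k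
/-- Backward difference in the second variable. -/
def D2m (u : ℤ → ℤ → ℝ) : ℤ → ℤ → ℝ := fun j k => u j k - u j (k - 1)
/-- Centered difference in the first variable. -/
def D10 (u : ℤ → ℤ → ℝ) : ℤ → ℤ → ℝ := fun j k => (D1p u j k + D1m u j k) / 2
/-- Centered difference in the second variable. -/
def D20 (u : ℤ → ℤ → ℝ) : ℤ → ℤ → ℝ := fun j k => (D2p u j k + D2m u j k) / 2
/-- Discrete Laplacian in the first variable. -/
def L1 (u : ℤ → ℤ → ℝ) : ℤ → ℤ → ℝ := D1p (D1m u)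
/-- Discrete Laplacian in the second variable. -/
def L2 (u : ℤ → ℤ → ℝ) : ℤ → ℤ → ℝ := D2p (D2m u)

/-- Squared ℓ²(ℤ²) norm. -/
def sqZ (u : ℤ → ℤ → ℝ) : ℝ := ∑' p : ℤ × ℤ, (u p.1 p.2) ^ 2
/-- ℓ²(ℤ²) scalar product. -/
def ipZ (u v : ℤ → ℤ → ℝ) : ℝ := ∑' p : ℤ × ℤ, u p.1 p.2 * v p.1 p.2

/-- Squared ℓ²(𝓘) norm over the interior indices 𝓘 = ℕ × ℤ of the half-space grid. -/
def sqH (u : ℤ → ℤ → ℝ) : ℝ := ∑' p : ℕ × ℤ, (u (p.1 : ℤ) p.2) ^ 2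
/-- ℓ²(𝓘) scalar product over the interior indices 𝓘 = ℕ × ℤ. -/
def ipH (u v : ℤ → ℤ → ℝ) : ℝ := ∑' p : ℕ × ℤ, u (p.1 : ℤ) p.2 * v (p.1 : ℤ) p.2
/-- Membership in ℋ : square-summable on the half-space grid and satisfying the
extrapolation (Neumann) boundary condition `u (-1) k = u 0 k`. -/
def memH (u : ℤ → ℤ → ℝ) : Prop :=
  (∀ k : ℤ, u (-1) k = u 0 k) ∧ Summable (fun p : ℕ × ℤ => (u (p.1 : ℤ) p.2) ^ 2)

/-- Squared ℓ²(𝔦) norm over the interior indices 𝔦 = ℕ × ℕ of the quarter-space grid. -/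
def sqQ (u : ℤ → ℤ → ℝ) : ℝ := ∑' p : ℕ × ℕ, (u (p.1 : ℤ) (p.2 : ℤ)) ^ 2
/-- ℓ²(𝔦) scalar product over the interior indices 𝔦 = ℕ × ℕ. -/
def ipQ (u v : ℤ → ℤ → ℝ) : ℝ :=
  ∑' p : ℕ × ℕ, u (p.1 : ℤ) (p.2 : ℤ) * v (p.1 : ℤ) (p.2 : ℤ)
/-- Membership in 𝔥 : square-summable on the quarter-space grid, satisfying the
extrapolation boundary conditions on both sides and the corner condition. -/
def memQ (u : ℤ → ℤ → ℝ) : Prop :=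
  (∀ k : ℤ, -1 ≤ k → u (-1) k = u 0 k) ∧ (∀ j : ℤ, 0 ≤ j → u j (-1) = u j 0) ∧
    Summable (fun p : ℕ × ℕ => (u (p.1 : ℤ) (p.2 : ℤ)) ^ 2)

/-- The skew-selfadjoint part `v` in the decomposition of the Lax-Wendroff scheme. -/
def vop (α β : ℝ) (u : ℤ → ℤ → ℝ) : ℤ → ℤ → ℝ :=
  fun j k => -α * D10 u j k - β * D20 u j k
/-- The selfadjoint part `w` in the decomposition of the Lax-Wendroff scheme. -/
def wop (α β : ℝ) (u : ℤ → ℤ → ℝ) : ℤ → ℤ → ℝ :=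
  fun j k => -(α ^ 2 / 2) * L1 u j k - (β ^ 2 / 2) * L2 u j k
    - α * β * D10 (D20 u) j k + ((α ^ 2 + β ^ 2) / 8) * L1 (L2 u) j k

/-- Lemma 5 (ii): `⟨D₁,₀ U ; Δ₁ U⟩_{ℓ²(𝓘)} = 0` for `U ∈ ℋ`. -/
theorem halfspace_d10_lap1_orthogonal (U : ℤ → ℤ → ℝ) (hU : memH U) :
    ipH (D10 U) (L1 U) = 0 := by
  obtain ⟨hb, hsum⟩ := hU
  set g : ℕ × ℤ → ℝ := fun p => (U ((p.1 : ℤ) + 1) p.2 - U (p.1 : ℤ) p.2) ^ 2 / 2 with hgdef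
  set gp : ℕ × ℤ → ℝ := fun p =>
    if p.1 = 0 then 0 else (U (p.1 : ℤ) p.2 - U ((p.1 : ℤ) - 1) p.2) ^ 2 / 2 with hgpdef
  have e_inj : Function.Injective (fun p : ℕ × ℤ => ((p.1 + 1, p.2) : ℕ × ℤ)) := by
    intro a b h
    simp only [Prod.mk.injEq, Nat.add_right_cancel_iff] at h
    exact Prod.ext h.1 h.2
  have hshift : Summable (fun p : ℕ × ℤ => (U ((p.1 : ℤ) + 1) p.2) ^ 2) := by
    have := hsum.comp_injective e_inj
    simpa [Function.comp_def] using this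
  have hg_sum : Summable g := by
    refine Summable.of_nonneg_of_le (fun p => by positivity) (fun p => ?_) (hshift.add hsum)
    simp only [hgdef]
    nlinarith [sq_nonneg (U ((p.1 : ℤ) + 1) p.2 + U (p.1 : ℤ) p.2)]
  have hcomp : (gp ∘ fun p : ℕ × ℤ => ((p.1 + 1, p.2) : ℕ × ℤ)) = g := by
    funext p
    simp only [hgpdef, hgdef, Function.comp_apply, Nat.add_eq_zero, one_ne_zero, and_false,
      if_false]
    push_cast
    ring_nf
  have hzero : ∀ x ∉ Set.range (fun p : ℕ × ℤ => ((p.1 + 1, p.2) : ℕ × ℤ)), gp x = 0 := by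
    rintro ⟨j, k⟩ hx
    rcases Nat.eq_zero_or_pos j with h | h
    · simp [hgpdef, h]
    · exact absurd ⟨(j - 1, k), by simp [Prod.ext_iff]; omega⟩ hx
  have hgp_sum : Summable gp := by
    rw [← Function.Injective.summable_iff e_inj hzero, hcomp]
    exact hg_sum
  have htsum : ∑' p : ℕ × ℤ, gp p = ∑' p : ℕ × ℤ, g p := by
    rw [← Function.Injective.tsum_eq e_inj (Function.support_subset_iff'.2 hzero)]
    exact tsum_congr fun p => congrFun hcomp p
  have hpt : ∀ p : ℕ × ℤ, D10 U (p.1 : ℤ) p.2 * L1 U (p.1 : ℤ) p.2 = g p - gp p := by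
    rintro ⟨j, k⟩
    cases j with
    | zero =>
      simp only [hgdef, hgpdef, D10, L1, D1p, D1m]
      norm_num
      rw [hb k]
      ring
    | succ n =>
      simp only [hgdef, hgpdef, D10, L1, D1p, D1m, Nat.succ_ne_zero, if_false]
      push_cast
      ring
  have : ipH (D10 U) (L1 U) = ∑' p : ℕ × ℤ, (g p - gp p) := by
    unfold ipH
    exact tsum_congr hpt
  rw [this, Summable.tsum_sub hg_sum hgp_sum, htsum, sub_self]
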